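/- Under the hypotheses of the previous lemma, for every W ⊆ V(G) with |W| ≥ μ, the number of pseudo-covers of W (with parameters κ, λ = 1/κ, μ = 2κ², ν = 2κ³) is less than κ^{2κ}. -/

import Mathlib

variable {V : Type*} [Fintype V] [DecidableEq V]

/-- The closed neighborhood of `v` as a finset. -/
def closedNbr (G : SimpleGraph V) [DecidableRel G.Adj] (v : V) : Finset V :=
  insert v (G.neighborFinset v)

/-- The elements of `W` not covered by the closed neighborhoods of the
vertices in the list `l`. -/
def uncovered (G : SimpleGraph V) [DecidableRel G.Adj] (W : Finset V)
    (l : List V) : Finset V :=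
  W.filter fun w => ∀ v ∈ l, w ∉ closedNbr G v

/-- A pseudo-cover of `W` with parameters `(κ, λ = 1/κ, μ, ν)`: a sequence
`(v₁, …, v_m)` with `m ≤ κ` such that each `vᵢ` is `1/κ`-strong for the part of
`W` not yet covered and covers at least `μ` of its elements, and at most `ν`
elements of `W` remain uncovered at the end. -/
def IsPseudoCover (G : SimpleGraph V) [DecidableRel G.Adj]
    (κ μ ν : ℕ) (W : Finset V) (l : List V) : Prop :=
  l.length ≤ κ ∧
  (∀ i : Fin l.length,
      (uncovered G W (l.take i.1)).card ≤
        κ * (closedNbr G (l.get i) ∩ uncovered G W (l.take i.1)).card ∧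
      μ ≤ (closedNbr G (l.get i) ∩ uncovered G W (l.take i.1)).card) ∧
  (uncovered G W l).card ≤ ν

/-- Twice the number of edges of the subgraph of `G` induced on `s`. -/
def pairCount (G : SimpleGraph V) [DecidableRel G.Adj] (s : Finset V) : ℕ :=
  (Finset.univ.filter fun p : V × V => p.1 ∈ s ∧ p.2 ∈ s ∧ G.Adj p.1 p.2).card

/-! ### Auxiliary arithmetic lemmas -/

lemma myGeom_le {r : ℕ} (hr : 2 ≤ r) : ∀ n, ∑ m ∈ Finset.range (n+1), r^m ≤ 2 * r^n := by
  intro n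
  induction n with
  | zero => simp
  | succ n ih =>
    rw [Finset.sum_range_succ]
    have h1 : 2 * r ^ n ≤ r ^ (n+1) := by
      rw [pow_succ]
      calc 2 * r ^ n = r ^ n * 2 := by ring
        _ ≤ r ^ n * r := Nat.mul_le_mul_left _ hr
    omega

lemma myBinom_ge {r : ℕ} (hr : 1 ≤ r) : ∀ k, r^(k+2) + (k+2) * r^(k+1) + 1 ≤ (r+1)^(k+2) := by
  intro k
  induction k with
  | zero => ring_nf; nlinarith [sq_nonneg r]
  | succ k ih =>
    show r^(k+3) + (k+3) * r^(k+2) + 1 ≤ (r+1)^(k+3)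
    have h : (r+1)^(k+3) = (r+1)^(k+2) * (r+1) := by ring
    have h2 : (r^(k+2) + (k+2) * r^(k+1) + 1) * (r+1) ≤ (r+1)^(k+2) * (r+1) :=
      Nat.mul_le_mul_right _ ih
    have h3 : r^(k+3) + (k+3) * r^(k+2) + 1 ≤ (r^(k+2) + (k+2) * r^(k+1) + 1) * (r+1) := by
      have hrr : r^(k+1) * r = r^(k+2) := by ring
      have hrr2 : r^(k+2) * r = r^(k+3) := by ring
      nlinarith [pow_pos (Nat.lt_of_lt_of_le Nat.zero_lt_one hr) (k+1)]
    omega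

lemma myArith (k s u p : ℕ) (hk : 2 ≤ k)
    (h1 : s * (2 * k ^ 2) ≤ p) (h2 : s * u ≤ k * p)
    (h3 : 2 * p ≤ k * (s + u) + 2 * s) (hcon : k ^ 2 ≤ s) : False := by
  have hs_pos : 0 < s := lt_of_lt_of_le (by positivity) hcon
  rcases le_or_gt u (2 * k ^ 3) with hU | hU
  · have e : 2 * (s * (2 * k ^ 2)) ≤ k * s + k * u + 2 * s :=
      le_trans (Nat.mul_le_mul_left 2 h1) (h3.trans_eq (by ring))
    have hA : k ^ 2 * k ^ 2 ≤ k ^ 2 * s := Nat.mul_le_mul_left _ hcon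
    have hB : k * u ≤ k * (2 * k ^ 3) := Nat.mul_le_mul_left _ hU
    have hC : (k + 2) * s ≤ k ^ 2 * s :=
      Nat.mul_le_mul_right _ (by nlinarith)
    nlinarith [e, hA, hB, hC]
  · have e2 : 2 * (s * u) ≤ k * (k * (s + u) + 2 * s) :=
      le_trans (Nat.mul_le_mul_left 2 h2)
        (by calc 2 * (k * p) = k * (2 * p) := by ring
              _ ≤ k * (k * (s + u) + 2 * s) := Nat.mul_le_mul_left _ h3)
    have e3 : 2 * (s * u) ≤ k ^ 2 * s + k ^ 2 * u + 2 * (k * s) := by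
      calc 2 * (s * u) ≤ k * (k * (s + u) + 2 * s) := e2
        _ = k ^ 2 * s + k ^ 2 * u + 2 * (k * s) := by ring
    have e4 : (k ^ 2 + s) * u ≤ 2 * (s * u) := by
      have : k ^ 2 + s ≤ 2 * s := by omega
      calc (k ^ 2 + s) * u ≤ 2 * s * u := Nat.mul_le_mul_right _ this
        _ = 2 * (s * u) := by ring
    have e5 : s * u ≤ k ^ 2 * s + 2 * (k * s) := by
      have := le_trans e4 e3
      nlinarith [this]
    have e6 : (2 * k ^ 3 + 1) * s ≤ (k ^ 2 + 2 * k) * s := by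
      calc (2 * k ^ 3 + 1) * s ≤ u * s := Nat.mul_le_mul_right _ (by omega)
        _ = s * u := by ring
        _ ≤ k ^ 2 * s + 2 * (k * s) := e5
        _ = (k ^ 2 + 2 * k) * s := by ring
    have e7 : 2 * k ^ 3 + 1 ≤ k ^ 2 + 2 * k := Nat.le_of_mul_le_mul_right e6 hs_pos
    nlinarith [e7, hk]

lemma myFinalArith (κ : ℕ) (hκ2 : 2 ≤ κ) :
    ∑ m ∈ Finset.range (κ+1), (κ^2 - 1)^m < κ ^ (2 * κ) := by
  obtain ⟨k, rfl⟩ : ∃ k, κ = k + 2 := ⟨κ - 2, by omega⟩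
  set r := (k+2)^2 - 1 with hrdef
  have h4 : 4 ≤ (k+2)^2 := by nlinarith
  have hr1 : r + 1 = (k+2)^2 := by omega
  have hr : 2 ≤ r := by omega
  have hsum : ∑ m ∈ Finset.range (k+3), r^m = (∑ m ∈ Finset.range (k+2), r^m) + r^(k+2) :=
    Finset.sum_range_succ _ _
  have hgeo : ∑ m ∈ Finset.range (k+2), r^m ≤ 2 * r^(k+1) := myGeom_le hr (k+1)
  have hbin : r^(k+2) + (k+2) * r^(k+1) + 1 ≤ (r+1)^(k+2) := myBinom_ge (by omega) k
  have h2k : 2 * r^(k+1) ≤ (k+2) * r^(k+1) := Nat.mul_le_mul_right _ (by omega)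
  have hpow : ((k+2)^2)^(k+2) = (k+2) ^ (2 * (k+2)) := (pow_mul (k+2) 2 (k+2)).symm
  calc ∑ m ∈ Finset.range (k+2+1), r^m = (∑ m ∈ Finset.range (k+2), r^m) + r^(k+2) := hsum
    _ ≤ 2 * r^(k+1) + r^(k+2) := by omega
    _ < r^(k+2) + (k+2) * r^(k+1) + 1 := by omega
    _ ≤ (r+1)^(k+2) := hbin
    _ = (k+2) ^ (2 * (k+2)) := by rw [hr1, hpow]

/-! ### Strong vertices -/

/-- The set of `1/κ`-strong vertices for `U` that cover at least `μ` elements of `U`. -/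
def strongSet (G : SimpleGraph V) [DecidableRel G.Adj] (κ μ : ℕ) (U : Finset V) :
    Finset V :=
  Finset.univ.filter fun v =>
    U.card ≤ κ * (closedNbr G v ∩ U).card ∧ μ ≤ (closedNbr G v ∩ U).card

lemma strongSet_card_lt (G : SimpleGraph V) [DecidableRel G.Adj]
    (nab0 κ : ℕ) (hκ2 : 2 ≤ κ) (hκ0 : 2 * nab0 ≤ κ)
    (hdens : ∀ s : Finset V, pairCount G s ≤ 2 * nab0 * s.card) (U : Finset V) :
    (strongSet G κ (2 * κ ^ 2) U).card < κ ^ 2 := by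
  set S := strongSet G κ (2 * κ ^ 2) U with hS
  have hSmem : ∀ v ∈ S, U.card ≤ κ * (closedNbr G v ∩ U).card ∧
      2 * κ ^ 2 ≤ (closedNbr G v ∩ U).card := by
    intro v hv
    exact (Finset.mem_filter.mp hv).2
  set P : Finset (V × V) :=
    S.biUnion (fun v => (closedNbr G v ∩ U).image (fun u => (v, u))) with hP
  have hPcard : P.card = ∑ v ∈ S, (closedNbr G v ∩ U).card := by
    rw [hP, Finset.card_biUnion]
    · exact Finset.sum_congr rfl fun v _ =>
        Finset.card_image_of_injective _ (fun a b h => by simpa using h)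
    · intro x hx y hy hxy
      simp only [Finset.disjoint_left, Finset.mem_image]
      rintro p ⟨a, _, rfl⟩ ⟨b, _, h⟩
      exact hxy (by simpa using (Prod.mk.injEq .. ▸ h).1.symm)
  have hPmem : ∀ p ∈ P, p.1 ∈ S ∧ p.2 ∈ closedNbr G p.1 ∧ p.2 ∈ U := by
    intro p hp
    rw [hP, Finset.mem_biUnion] at hp
    obtain ⟨v, hv, hpv⟩ := hp
    rw [Finset.mem_image] at hpv
    obtain ⟨u, hu, rfl⟩ := hpv
    exact ⟨hv, (Finset.mem_inter.mp hu).1, (Finset.mem_inter.mp hu).2⟩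
  have hlow1 : S.card * (2 * κ ^ 2) ≤ P.card := by
    rw [hPcard]
    calc S.card * (2 * κ ^ 2) = ∑ _v ∈ S, 2 * κ ^ 2 := by
          rw [Finset.sum_const, smul_eq_mul]
      _ ≤ ∑ v ∈ S, (closedNbr G v ∩ U).card :=
          Finset.sum_le_sum fun v hv => (hSmem v hv).2
  have hlow2 : S.card * U.card ≤ κ * P.card := by
    rw [hPcard, Finset.mul_sum]
    calc S.card * U.card = ∑ _v ∈ S, U.card := by rw [Finset.sum_const, smul_eq_mul]
      _ ≤ ∑ v ∈ S, κ * (closedNbr G v ∩ U).card :=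
          Finset.sum_le_sum fun v hv => (hSmem v hv).1
  set Pd : Finset (V × V) := P.filter (fun p => G.Adj p.1 p.2) with hPd
  have hsplit : P.card ≤ Pd.card + S.card := by
    have heq : Pd.card + (P.filter fun p => ¬ G.Adj p.1 p.2).card = P.card := by
      rw [hPd]
      exact Finset.card_filter_add_card_filter_not
        (s := P) (p := fun p => G.Adj p.1 p.2)
    have hdiag : (P.filter fun p => ¬ G.Adj p.1 p.2).card ≤ S.card := by
      apply Finset.card_le_card_of_injOn Prod.fst
      · intro p hp
        rw [Finset.mem_coe, Finset.mem_filter] at hp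
        exact (hPmem p hp.1).1
      · intro p hp q hq hpq
        rw [Finset.mem_coe, Finset.mem_filter] at hp hq
        have hp2 : p.2 = p.1 := by
          have := (hPmem p hp.1).2.1
          rw [closedNbr, Finset.mem_insert, SimpleGraph.mem_neighborFinset] at this
          rcases this with h | h
          · exact h
          · exact absurd h hp.2
        have hq2 : q.2 = q.1 := by
          have := (hPmem q hq.1).2.1
          rw [closedNbr, Finset.mem_insert, SimpleGraph.mem_neighborFinset] at this
          rcases this with h | h
          · exact h
          · exact absurd h hq.2
        exact Prod.ext hpq (by rw [hp2, hq2, hpq])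
    omega
  set Q : Finset (V × V) := Pd.image Prod.swap with hQ
  have hQcard : Q.card = Pd.card := Finset.card_image_of_injective _ Prod.swap_injective
  have hQmem : ∀ p ∈ Q, p.1 ∈ U ∧ p.2 ∈ S ∧ G.Adj p.1 p.2 := by
    intro p hp
    rw [hQ, Finset.mem_image] at hp
    obtain ⟨q, hq, rfl⟩ := hp
    rw [hPd, Finset.mem_filter] at hq
    obtain ⟨hqP, hadj⟩ := hq
    exact ⟨(hPmem q hqP).2.2, (hPmem q hqP).1, hadj.symm⟩
  have hPdmem : ∀ p ∈ Pd, p.1 ∈ S ∧ p.2 ∈ U ∧ G.Adj p.1 p.2 := by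
    intro p hp
    rw [hPd, Finset.mem_filter] at hp
    exact ⟨(hPmem p hp.1).1, (hPmem p hp.1).2.2, hp.2⟩
  have hsub1 : Pd ∪ Q ⊆ Finset.univ.filter fun p : V × V =>
      p.1 ∈ S ∪ U ∧ p.2 ∈ S ∪ U ∧ G.Adj p.1 p.2 := by
    intro p hp
    rw [Finset.mem_union] at hp
    rw [Finset.mem_filter]
    rcases hp with hp | hp
    · obtain ⟨h1, h2, h3⟩ := hPdmem p hp
      exact ⟨Finset.mem_univ _, Finset.mem_union_left _ h1, Finset.mem_union_right _ h2, h3⟩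
    · obtain ⟨h1, h2, h3⟩ := hQmem p hp
      exact ⟨Finset.mem_univ _, Finset.mem_union_right _ h1, Finset.mem_union_left _ h2, h3⟩
  have hsub2 : Pd ∩ Q ⊆ Finset.univ.filter fun p : V × V =>
      p.1 ∈ S ∩ U ∧ p.2 ∈ S ∩ U ∧ G.Adj p.1 p.2 := by
    intro p hp
    rw [Finset.mem_inter] at hp
    obtain ⟨h1, h2, h3⟩ := hPdmem p hp.1
    obtain ⟨h4, h5, _⟩ := hQmem p hp.2
    rw [Finset.mem_filter]
    exact ⟨Finset.mem_univ _, Finset.mem_inter.mpr ⟨h1, h4⟩,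
      Finset.mem_inter.mpr ⟨h5, h2⟩, h3⟩
  have hkey : 2 * Pd.card ≤ κ * (S.card + U.card) := by
    have h1 : (Pd ∪ Q).card + (Pd ∩ Q).card = Pd.card + Q.card :=
      Finset.card_union_add_card_inter _ _
    have h2 : (Pd ∪ Q).card ≤ pairCount G (S ∪ U) :=
      Finset.card_le_card hsub1
    have h3 : (Pd ∩ Q).card ≤ pairCount G (S ∩ U) :=
      Finset.card_le_card hsub2
    have h4 := hdens (S ∪ U)
    have h5 := hdens (S ∩ U)
    have h6 : (S ∪ U).card + (S ∩ U).card = S.card + U.card :=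
      Finset.card_union_add_card_inter _ _
    have h7 : 2 * nab0 * (S ∪ U).card + 2 * nab0 * (S ∩ U).card ≤
        κ * (S.card + U.card) := by
      rw [← Nat.mul_add, ← h6]
      exact Nat.mul_le_mul_right _ hκ0
    omega
  have hmain : 2 * P.card ≤ κ * (S.card + U.card) + 2 * S.card := by omega
  by_contra hcon
  push_neg at hcon
  exact myArith κ S.card U.card P.card hκ2 hlow1 hlow2 hmain hcon

/-! ### Counting lists built step by step -/

def goodLists (F : List V → Finset V) : ℕ → Finset (List V)
  | 0 => {[]}
  | n+1 => (goodLists F n).biUnion fun l => (F l).image fun v => l ++ [v]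

lemma mem_goodLists (F : List V → Finset V) (l : List V)
    (h : ∀ i : Fin l.length, l.get i ∈ F (l.take i.1)) : l ∈ goodLists F l.length := by
  induction l using List.reverseRecOn with
  | nil => simp [goodLists]
  | append_singleton l' v ih =>
    have hlen : (l' ++ [v]).length = l'.length + 1 := by simp
    rw [hlen, goodLists]
    apply Finset.mem_biUnion.mpr
    refine ⟨l', ?_, ?_⟩
    · apply ih
      intro i
      have hi : i.1 < (l' ++ [v]).length := by simp
      have h1 := h ⟨i.1, hi⟩
      have e1 : (l' ++ [v]).get ⟨i.1, hi⟩ = l'.get i := by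
        simp [List.getElem_append_left i.2]
      have e2 : (l' ++ [v]).take i.1 = l'.take i.1 :=
        List.take_append_of_le_length (le_of_lt i.2)
      rw [e1, e2] at h1; exact h1
    · apply Finset.mem_image.mpr
      refine ⟨v, ?_, rfl⟩
      have hi : l'.length < (l' ++ [v]).length := by simp
      have h1 := h ⟨l'.length, hi⟩
      have e1 : (l' ++ [v]).get ⟨l'.length, hi⟩ = v := by simp
      have e2 : (l' ++ [v]).take l'.length = l' := List.take_left
      rw [e1, e2] at h1; exact h1

lemma goodLists_card (F : List V → Finset V) (c : ℕ) (hF : ∀ l, (F l).card ≤ c) :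
    ∀ n, (goodLists F n).card ≤ c^n := by
  intro n
  induction n with
  | zero => simp [goodLists]
  | succ n ih =>
    rw [goodLists]
    calc ((goodLists F n).biUnion fun l => (F l).image fun v => l ++ [v]).card
        ≤ ∑ l ∈ goodLists F n, ((F l).image fun v => l ++ [v]).card :=
          Finset.card_biUnion_le
      _ ≤ ∑ l ∈ goodLists F n, c := Finset.sum_le_sum fun l _ =>
          (Finset.card_image_le).trans (hF l)
      _ = (goodLists F n).card * c := by rw [Finset.sum_const, smul_eq_mul]
      _ ≤ c^n * c := Nat.mul_le_mul_right _ ih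
      _ = c^(n+1) := by ring

/-- Under the density hypotheses (`∇₀(G) ≤ ∇₀ ≤ ∇`, `κ = max(2∇₀,2∇)`), for
every `W` with `|W| ≥ μ = 2κ²`, the set of pseudo-covers of `W` (parameters
`κ, λ = 1/κ, μ = 2κ², ν = 2κ³`) is finite of size less than `κ^(2κ)`. -/
theorem stmt9 {V : Type*} [Fintype V] [DecidableEq V]
    (G : SimpleGraph V) [DecidableRel G.Adj]
    (nab0 nab κ : ℕ) (hpos : 0 < nab0) (h0 : nab0 ≤ nab)
    (hκ : κ = max (2 * nab0) (2 * nab))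
    (hdens : ∀ s : Finset V, pairCount G s ≤ 2 * nab0 * s.card)
    (W : Finset V) (hW : 2 * κ ^ 2 ≤ W.card) :
    {l : List V | IsPseudoCover G κ (2 * κ ^ 2) (2 * κ ^ 3) W l}.Finite ∧
    {l : List V | IsPseudoCover G κ (2 * κ ^ 2) (2 * κ ^ 3) W l}.ncard
      < κ ^ (2 * κ) := by
  have hκ0 : 2 * nab0 ≤ κ := hκ ▸ le_max_left _ _
  have hκ2 : 2 ≤ κ := le_trans (by omega) hκ0
  set F : List V → Finset V := fun l => strongSet G κ (2 * κ ^ 2) (uncovered G W l)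
    with hF
  have hFc : ∀ l, (F l).card ≤ κ ^ 2 - 1 := fun l =>
    Nat.le_sub_one_of_lt (strongSet_card_lt G nab0 κ hκ2 hκ0 hdens _)
  set B : Finset (List V) := (Finset.range (κ+1)).biUnion (goodLists F) with hB
  have hsub : {l : List V | IsPseudoCover G κ (2 * κ ^ 2) (2 * κ ^ 3) W l} ⊆ ↑B := by
    intro l hl
    obtain ⟨h1, h2, _⟩ := hl
    apply Finset.mem_coe.mpr
    rw [hB, Finset.mem_biUnion]
    refine ⟨l.length, Finset.mem_range.mpr (by omega), ?_⟩
    apply mem_goodLists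
    intro i
    rw [hF]
    exact Finset.mem_filter.mpr ⟨Finset.mem_univ _, h2 i⟩
  have hfin : {l : List V | IsPseudoCover G κ (2 * κ ^ 2) (2 * κ ^ 3) W l}.Finite :=
    Set.Finite.subset B.finite_toSet hsub
  refine ⟨hfin, ?_⟩
  calc {l : List V | IsPseudoCover G κ (2 * κ ^ 2) (2 * κ ^ 3) W l}.ncard
      ≤ (↑B : Set (List V)).ncard := Set.ncard_le_ncard hsub B.finite_toSet
    _ = B.card := Set.ncard_coe_finset B
    _ ≤ ∑ m ∈ Finset.range (κ+1), (goodLists F m).card := Finset.card_biUnion_le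
    _ ≤ ∑ m ∈ Finset.range (κ+1), (κ^2 - 1)^m :=
        Finset.sum_le_sum fun m _ => goodLists_card F _ hFc m
    _ < κ ^ (2 * κ) := myFinalArith κ hκ2
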